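/- Let $g:[a,b]\to\mathbb{R}$ be left-continuous and nondecreasing with Lebesgue–Stieltjes measure $\mu_g$, and $h\in L^1(\mu_g)$ nonnegative. Define $e_L(t) = \exp\big(\int_{[a,t)}\overline{h}\,d\mu_g\big)$ where $\overline{h}(s) = h(s)$ for $s\notin D_g$ and $\overline{h}(s) = \log(1+h(s)\Delta^+g(s))/\Delta^+g(s)$ for $s\in D_g$. Then for every $t\in D_g$, $e_L(t^+) - e_L(t) = h(t)\,e_L(t)\,\Delta^+ g(t)$. -/

import Mathlib

open Set Filter MeasureTheory
open scoped Classical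

/-- The modified integrand `h̄` for a nondecreasing derivator. -/
noncomputable def hbar (g h : ℝ → ℝ) (t : ℝ) : ℝ :=
  if Function.rightLim g t ≠ g t then
    Real.log (1 + h t * (Function.rightLim g t - g t)) / (Function.rightLim g t - g t)
  else h t

lemma measurable_indicator_of_countable {D : Set ℝ} (hD : D.Countable) (f : ℝ → ℝ) :
    Measurable (D.indicator f) := by
  intro s hs
  by_cases h0 : (0 : ℝ) ∈ s
  · have : D.indicator f ⁻¹' s = (D ∩ f ⁻¹' s) ∪ Dᶜ := by
      ext x; by_cases hx : x ∈ D <;> simp [Set.indicator_apply, hx, h0]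
    rw [this]
    exact ((hD.mono inter_subset_left).measurableSet).union hD.measurableSet.compl
  · have : D.indicator f ⁻¹' s = D ∩ f ⁻¹' s := by
      ext x; by_cases hx : x ∈ D <;> simp [Set.indicator_apply, hx, h0]
    rw [this]
    exact (hD.mono inter_subset_left).measurableSet

/-- At every atom `t ∈ D_g`, the exponential `e_L(t) = exp(∫_{[a,t)} h̄ dμ_g)`
satisfies `e_L(t⁺) - e_L(t) = h(t) e_L(t) Δ⁺g(t)`. -/
theorem gExp_jump (a b : ℝ) (hab : a < b) (g : ℝ → ℝ)
    (hmono : MonotoneOn g (Icc a b))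
    (hlc : ∀ t ∈ Ioc a b, Tendsto g (nhdsWithin t (Iio t)) (nhds (g t)))
    (μ : Measure ℝ)
    (hμ : ∀ u ∈ Icc a b, ∀ v ∈ Icc a b, u ≤ v → μ (Ico u v) = ENNReal.ofReal (g v - g u))
    (h : ℝ → ℝ) (hpos : ∀ s, 0 ≤ h s)
    (hint : IntegrableOn h (Ico a b) μ)
    (t : ℝ) (ht : t ∈ Ico a b) (htD : g t < Function.rightLim g t) :
    Tendsto (fun s => Real.exp (∫ x in Ico a s, hbar g h x ∂μ))
      (nhdsWithin t (Ioc t b))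
      (nhds (Real.exp (∫ x in Ico a t, hbar g h x ∂μ) *
        (1 + h t * (Function.rightLim g t - g t)))) := by
  classical
  -- Monotone extension of g to all of ℝ
  set G : ℝ → ℝ := fun x => g (max a (min x b)) with hG_def
  have hproj : ∀ x, max a (min x b) ∈ Icc a b := fun x =>
    ⟨le_max_left _ _, max_le hab.le (min_le_right _ _)⟩
  have hG : Monotone G := fun x y hxy =>
    hmono (hproj x) (hproj y) (max_le_max le_rfl (min_le_min hxy le_rfl))
  have hGg : ∀ x ∈ Icc a b, G x = g x := by
    intro x hx
    simp only [hG_def]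
    rw [min_eq_left hx.2, max_eq_right hx.1]
  have hg_eqf : ∀ x ∈ Ico a b, g =ᶠ[nhdsWithin x (Ioi x)] G := by
    intro x hx
    filter_upwards [Ioc_mem_nhdsGT hx.2] with y hy
    exact (hGg y ⟨hx.1.trans hy.1.le, hy.2⟩).symm
  -- right limits of g on [a, b)
  have key : ∀ x ∈ Ico a b,
      Tendsto g (nhdsWithin x (Ioi x)) (nhds (Function.rightLim g x)) ∧
      g x ≤ Function.rightLim g x := by
    intro x hx
    have h1 : Tendsto G (nhdsWithin x (Ioi x)) (nhds (Function.rightLim G x)) :=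
      hG.tendsto_rightLim x
    have h2 : Tendsto g (nhdsWithin x (Ioi x)) (nhds (Function.rightLim G x)) :=
      h1.congr' (hg_eqf x hx).symm
    have h3 : Function.rightLim g x = Function.rightLim G x :=
      rightLim_eq_of_tendsto h2
    refine ⟨h3 ▸ h2, ?_⟩
    rw [h3, ← hGg x (Ico_subset_Icc_self hx)]
    exact hG.le_rightLim le_rfl
  -- countability of the jump set inside [a, b)
  set D : Set ℝ := {x | x ∈ Ico a b ∧ Function.rightLim g x ≠ g x} with hD_def
  have hD_count : D.Countable := by
    apply hG.countable_not_continuousAt.mono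
    rintro x ⟨hx, hne⟩ hcont
    have h2 : Tendsto g (nhdsWithin x (Ioi x)) (nhds (g x)) := by
      have : Tendsto G (nhdsWithin x (Ioi x)) (nhds (G x)) :=
        (hcont.tendsto).mono_left nhdsWithin_le_nhds
      rw [hGg x (Ico_subset_Icc_self hx)] at this
      exact this.congr' (hg_eqf x hx).symm
    exact hne (rightLim_eq_of_tendsto h2)
  -- pointwise bounds for hbar on [a, b)
  have hbar_bd : ∀ x ∈ Ico a b, 0 ≤ hbar g h x ∧ hbar g h x ≤ h x := by
    intro x hx
    unfold hbar
    by_cases hne : Function.rightLim g x ≠ g x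
    · rw [if_pos hne]
      have hΔ : 0 < Function.rightLim g x - g x :=
        sub_pos.2 (lt_of_le_of_ne (key x hx).2 (Ne.symm hne))
      set Δ := Function.rightLim g x - g x
      have hy : 0 ≤ h x * Δ := mul_nonneg (hpos x) hΔ.le
      have hlog0 : 0 ≤ Real.log (1 + h x * Δ) := Real.log_nonneg (by linarith)
      have hlog1 : Real.log (1 + h x * Δ) ≤ h x * Δ := by
        have := Real.log_le_sub_one_of_pos (x := 1 + h x * Δ) (by linarith)
        linarith
      constructor
      · exact div_nonneg hlog0 hΔ.le
      · rw [div_le_iff₀ hΔ]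
        exact hlog1
    · rw [if_neg hne]
      exact ⟨hpos x, le_rfl⟩
  -- integrability of hbar on [a, b)
  have hbar_int : IntegrableOn (hbar g h) (Ico a b) μ := by
    have hmeas : AEStronglyMeasurable (hbar g h) (μ.restrict (Ico a b)) := by
      have hφ : AEStronglyMeasurable
          (fun x => h x + D.indicator (fun y => hbar g h y - h y) x)
          (μ.restrict (Ico a b)) :=
        hint.aestronglyMeasurable.add
          ((measurable_indicator_of_countable hD_count _).aestronglyMeasurable)
      refine hφ.congr ?_
      refine ((ae_restrict_iff' measurableSet_Ico).2 (ae_of_all _ ?_))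
      intro x hx
      by_cases hne : Function.rightLim g x ≠ g x
      · have hxD : x ∈ D := ⟨hx, hne⟩
        simp [Set.indicator_of_mem hxD]
      · have hxD : x ∉ D := fun hc => hne hc.2
        simp [Set.indicator_of_notMem hxD, hbar, not_not.1 hne]
    refine Integrable.mono hint hmeas ?_
    refine (ae_restrict_iff' measurableSet_Ico).2 (ae_of_all _ fun x hx => ?_)
    have := hbar_bd x hx
    rw [Real.norm_eq_abs, Real.norm_eq_abs, abs_of_nonneg this.1, abs_of_nonneg (hpos x)]
    exact this.2
  -- the sequence approaching t from the right
  have htb : t < b := ht.2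
  set u : ℕ → ℝ := fun n => t + (b - t) / (n + 1) with hu_def
  have hu_gt : ∀ n, t < u n := by
    intro n
    have : 0 < (b - t) / (n + 1) := div_pos (by linarith) (by positivity)
    simp only [hu_def]; linarith
  have hu_le : ∀ n, u n ≤ b := by
    intro n
    have h1 : (b - t) / (n + 1) ≤ (b - t) / 1 := by
      apply div_le_div_of_nonneg_left (by linarith) one_pos
      exact_mod_cast Nat.succ_le_succ (Nat.zero_le n)
    simp only [hu_def]
    rw [div_one] at h1; linarith
  have hu_anti : Antitone u := by
    intro n m hnm
    simp only [hu_def, add_le_add_iff_left]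
    apply div_le_div_of_nonneg_left (by linarith) (by positivity)
    exact_mod_cast Nat.succ_le_succ hnm
  have hu_tendsto : Tendsto u atTop (nhds t) := by
    have : Tendsto (fun n : ℕ => (b - t) / (n + 1)) atTop (nhds 0) := by
      have h0 := tendsto_const_div_atTop_nhds_zero_nat (b - t)
      refine (h0.comp (tendsto_add_atTop_nat 1)).congr fun n => ?_
      simp only [Function.comp_apply]
      push_cast
      ring
    simpa using tendsto_const_nhds.add this
  have hu_tendsto' : Tendsto u atTop (nhdsWithin t (Ioi t)) :=
    tendsto_nhdsWithin_iff.2 ⟨hu_tendsto, Eventually.of_forall hu_gt⟩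
  -- μ {t} = ofReal Δ
  set Δ := Function.rightLim g t - g t with hΔ_def
  have hΔ : 0 < Δ := sub_pos.2 htD
  have hμt : μ {t} = ENNReal.ofReal Δ := by
    have h1 : Tendsto (μ ∘ fun n => Ico t (u n)) atTop (nhds (μ (⋂ n, Ico t (u n)))) := by
      apply tendsto_measure_iInter_atTop
        (fun n => measurableSet_Ico.nullMeasurableSet)
        (fun n m hnm => Ico_subset_Ico le_rfl (hu_anti hnm))
      refine ⟨0, ?_⟩
      rw [hμ t (Ico_subset_Icc_self ht) (u 0) ⟨by linarith [hu_gt 0, ht.1], hu_le 0⟩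
        (hu_gt 0).le]
      exact ENNReal.ofReal_ne_top
    have hInter : (⋂ n, Ico t (u n)) = {t} := by
      ext x
      simp only [mem_iInter, mem_Ico, mem_singleton_iff]
      constructor
      · rintro hx
        have hxt : t ≤ x := (hx 0).1
        have hxle : x ≤ t := ge_of_tendsto hu_tendsto (Eventually.of_forall fun n => (hx n).2.le)
        linarith
      · rintro rfl
        exact fun n => ⟨le_rfl, hu_gt n⟩
    have h2 : Tendsto (μ ∘ fun n => Ico t (u n)) atTop (nhds (ENNReal.ofReal Δ)) := by
      have hgu : Tendsto (fun n => g (u n) - g t) atTop (nhds Δ) := by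
        exact ((key t ht).1.comp hu_tendsto').sub tendsto_const_nhds
      have : Tendsto (fun n => ENNReal.ofReal (g (u n) - g t)) atTop (nhds (ENNReal.ofReal Δ)) :=
        (ENNReal.continuous_ofReal.tendsto _).comp hgu
      refine this.congr fun n => ?_
      rw [Function.comp_apply, hμ t (Ico_subset_Icc_self ht) (u n)
        ⟨by linarith [hu_gt n, ht.1], hu_le n⟩ (hu_gt n).le]
    rw [← hInter]
    exact tendsto_nhds_unique h1 h2
  -- value of hbar at t
  have htne : Function.rightLim g t ≠ g t := htD.ne'
  have hbart : hbar g h t = Real.log (1 + h t * Δ) / Δ := by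
    rw [hΔ_def]
    simp only [hbar]
    rw [if_pos htne]
  -- integral over {t}
  have hsingle : ∫ x in ({t} : Set ℝ), hbar g h x ∂μ = Real.log (1 + h t * Δ) := by
    rw [integral_singleton, measureReal_def, hμt, ENNReal.toReal_ofReal hΔ.le, hbart, smul_eq_mul]
    field_simp
  -- splitting the integral
  have hsplit : ∀ s ∈ Ioc t b, (∫ x in Ico a s, hbar g h x ∂μ) =
      (∫ x in Ico a t, hbar g h x ∂μ) + Real.log (1 + h t * Δ) +
      ∫ x in Ioo t s, hbar g h x ∂μ := by
    intro s hs
    have hIoo_sub : Ioo t s ⊆ Ico a b := fun x hx =>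
      ⟨ht.1.trans hx.1.le, lt_of_lt_of_le hx.2 hs.2⟩
    have h1 : Ico a s = Ico a t ∪ Ico t s := (Ico_union_Ico_eq_Ico ht.1 hs.1.le).symm
    have h2 : Ico t s = {t} ∪ Ioo t s := by
      rw [← Ioo_insert_left hs.1, insert_eq]
    have hint1 : IntegrableOn (hbar g h) (Ico a t) μ :=
      hbar_int.mono_set (Ico_subset_Ico le_rfl htb.le)
    have hint2 : IntegrableOn (hbar g h) ({t} : Set ℝ) μ :=
      hbar_int.mono_set (singleton_subset_iff.2 ht)
    have hint3 : IntegrableOn (hbar g h) (Ioo t s) μ := hbar_int.mono_set hIoo_sub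
    rw [h1, setIntegral_union (Ico_disjoint_Ico_same) measurableSet_Ico hint1
      (by rw [h2]; exact hint2.union hint3), h2,
      setIntegral_union (by simp [Set.disjoint_left]) measurableSet_Ioo hint2 hint3,
      hsingle, add_assoc]
  -- the remainder integral tends to 0
  have hJ : Tendsto (fun s => ∫ x in Ioo t s, hbar g h x ∂μ)
      (nhdsWithin t (Ioc t b)) (nhds 0) := by
    rw [tendsto_order]
    constructor
    · intro c hc
      filter_upwards [self_mem_nhdsWithin] with s hs
      have hIoo_sub : Ioo t s ⊆ Ico a b := fun x hx =>
        ⟨ht.1.trans hx.1.le, lt_of_lt_of_le hx.2 hs.2⟩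
      have : 0 ≤ ∫ x in Ioo t s, hbar g h x ∂μ :=
        setIntegral_nonneg measurableSet_Ioo fun x hx => (hbar_bd x (hIoo_sub hx)).1
      linarith
    · intro ε hε
      -- find s₀ with small h-integral
      have hEmpty : (⋂ n, Ioo t (u n)) = ∅ := by
        ext x
        simp only [mem_iInter, mem_Ioo, mem_empty_iff_false, iff_false, not_forall]
        by_contra hx
        push_neg at hx
        have hxt : t < x := (hx 0).1
        have : x ≤ t := ge_of_tendsto hu_tendsto (Eventually.of_forall fun n => (hx n).2.le)
        linarith
      have hanti : Tendsto (fun n => ∫ x in Ioo t (u n), h x ∂μ) atTop (nhds 0) := by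
        have := tendsto_setIntegral_of_antitone (f := h) (μ := μ)
          (fun n : ℕ => measurableSet_Ioo)
          (fun n m hnm => Ioo_subset_Ioo le_rfl (hu_anti hnm))
          ⟨0, hint.mono_set fun x hx => ⟨ht.1.trans hx.1.le, lt_of_lt_of_le hx.2 (hu_le 0)⟩⟩
        rwa [hEmpty, setIntegral_empty] at this
      obtain ⟨n, hn⟩ := (hanti.eventually (eventually_lt_nhds hε)).exists
      have hs0 : t < u n := hu_gt n
      filter_upwards [inter_mem_nhdsWithin (Ioc t b) (Iio_mem_nhds hs0)] with s hs
      obtain ⟨hs1, hs2⟩ := hs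
      have hIoo_sub : Ioo t s ⊆ Ico a b := fun x hx =>
        ⟨ht.1.trans hx.1.le, lt_of_lt_of_le hx.2 hs1.2⟩
      have hb1 : (∫ x in Ioo t s, hbar g h x ∂μ) ≤ ∫ x in Ioo t s, h x ∂μ := by
        apply setIntegral_mono_on (hbar_int.mono_set hIoo_sub) (hint.mono_set hIoo_sub)
          measurableSet_Ioo
        exact fun x hx => (hbar_bd x (hIoo_sub hx)).2
      have hb2 : (∫ x in Ioo t s, h x ∂μ) ≤ ∫ x in Ioo t (u n), h x ∂μ := by
        apply setIntegral_mono_set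
          (hint.mono_set fun x hx => ⟨ht.1.trans hx.1.le, lt_of_lt_of_le hx.2 (hu_le n)⟩)
          (ae_of_all _ fun x => hpos x)
          (HasSubset.Subset.eventuallyLE (Ioo_subset_Ioo le_rfl hs2.le))
      linarith
  -- assemble
  have hI : Tendsto (fun s => ∫ x in Ico a s, hbar g h x ∂μ)
      (nhdsWithin t (Ioc t b))
      (nhds ((∫ x in Ico a t, hbar g h x ∂μ) + Real.log (1 + h t * Δ))) := by
    have := hJ.const_add ((∫ x in Ico a t, hbar g h x ∂μ) + Real.log (1 + h t * Δ))
    rw [add_zero] at this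
    refine this.congr' ?_
    filter_upwards [self_mem_nhdsWithin] with s hs
    exact (hsplit s hs).symm
  have hfin := (Real.continuous_exp.tendsto _).comp hI
  have hpos1 : 0 < 1 + h t * Δ := by
    have := mul_nonneg (hpos t) hΔ.le
    linarith
  rw [Function.comp_def] at hfin
  convert hfin using 2
  rw [Real.exp_add, Real.exp_log hpos1]
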